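/- Let d ≥ 1 and 1 < q < ∞. The Hardy-Littlewood maximal operator M is not bounded on the Morrey space M^1_q; that is, there is no constant C > 0 such that ‖Mf‖_{M^1_q} ≤ C · ‖f‖_{M^1_q} for every locally integrable f on ℝ^d with ‖f‖_{M^1_q} < ∞. -/

import Mathlib

open MeasureTheory Metric ENNReal

/-- The Morrey norm `‖F‖_{M^1_q}` (exponent `p = 1`) of an `ℝ≥0∞`-valued function on `ℝ^d`:
`sup_{a, r>0} |B(a,r)|^{1/q - 1} ∫_{B(a,r)} F`. -/
noncomputable def morreyNormOne (d : ℕ) (q : ℝ)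
    (F : EuclideanSpace ℝ (Fin d) → ℝ≥0∞) : ℝ≥0∞ :=
  ⨆ (a : EuclideanSpace ℝ (Fin d)) (r : ℝ) (_ : 0 < r),
    volume (ball a r) ^ (1 / q - 1) * ∫⁻ y in ball a r, F y

/-- The weak Morrey quasi-norm `‖F‖_{wM^1_q} := sup_{γ>0} γ · ‖χ_{{F > γ}}‖_{M^1_q}` of an
`ℝ≥0∞`-valued function. -/
noncomputable def weakMorreyNormOne (d : ℕ) (q : ℝ)
    (F : EuclideanSpace ℝ (Fin d) → ℝ≥0∞) : ℝ≥0∞ :=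
  ⨆ (γ : ℝ) (_ : 0 < γ),
    ENNReal.ofReal γ *
      morreyNormOne d q (Set.indicator {x | ENNReal.ofReal γ < F x} 1)

/-- The Hardy-Littlewood maximal function
`Mf(x) := sup_{r>0} (1/|B(x,r)|) ∫_{B(x,r)} |f(y)| dy`. -/
noncomputable def maximalFn (d : ℕ) (f : EuclideanSpace ℝ (Fin d) → ℝ)
    (x : EuclideanSpace ℝ (Fin d)) : ℝ≥0∞ :=
  ⨆ (r : ℝ) (_ : 0 < r),
    (volume (ball x r))⁻¹ * ∫⁻ y in ball x r, ENNReal.ofReal |f y|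

namespace MaxMorreyAux

lemma coord_le_dist {d : ℕ} (x y : EuclideanSpace ℝ (Fin d)) (i : Fin d) :
    |x i - y i| ≤ dist x y := by
  rw [EuclideanSpace.dist_eq]
  have h2 : dist (x i) (y i) ^ 2 ≤ ∑ k, dist (x k) (y k) ^ 2 :=
    Finset.single_le_sum (f := fun k => dist (x k) (y k) ^ 2)
      (fun k _ => sq_nonneg _) (Finset.mem_univ i)
  calc |x i - y i| = dist (x i) (y i) := (Real.dist_eq _ _).symm
    _ = Real.sqrt (dist (x i) (y i) ^ 2) := (Real.sqrt_sq dist_nonneg).symm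
    _ ≤ _ := Real.sqrt_le_sqrt h2

lemma card_window {n : ℕ} (P : Fin n → Prop) [DecidablePred P] {c ℓ : ℝ}
    (h : ∀ k : Fin n, P k → c < (k : ℝ) ∧ (k : ℝ) < c + ℓ) :
    (Finset.univ.filter P).card ≤ ⌈ℓ⌉₊ := by
  classical
  set S := Finset.univ.filter P with hS
  rcases S.eq_empty_or_nonempty with h0 | hne
  · simp [h0]
  · have hmem : ∀ k ∈ S, P k := fun k hk => (Finset.mem_filter.mp hk).2
    set k₀ := S.min' hne with hk₀
    have hk₀S : k₀ ∈ S := S.min'_mem hne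
    have hcard : S.card ≤ (Finset.Ico (k₀ : ℕ) ((k₀ : ℕ) + ⌈ℓ⌉₊)).card := by
      refine Finset.card_le_card_of_injOn (fun k => (k : ℕ)) ?_ ?_
      · intro k hk
        rw [Finset.mem_coe, Finset.mem_Ico]
        refine ⟨S.min'_le k hk, ?_⟩
        have h1 : ((k : ℕ) : ℝ) < (k₀ : ℕ) + ℓ := by
          have ha := (h k (hmem k hk)).2
          have hb := (h k₀ (hmem k₀ hk₀S)).1
          linarith
        have h2 : ((k : ℕ) : ℝ) < (((k₀ : ℕ) + ⌈ℓ⌉₊ : ℕ) : ℝ) := by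
          push_cast
          have := Nat.le_ceil ℓ
          linarith
        exact_mod_cast h2
      · intro a _ b _ hab
        exact Fin.val_injective hab
    calc S.card ≤ (Finset.Ico (k₀ : ℕ) ((k₀ : ℕ) + ⌈ℓ⌉₊)).card := hcard
      _ = ⌈ℓ⌉₊ := by rw [Nat.card_Ico]; omega

lemma rpow_sub_one_mul {x : ℝ} (hx : 0 < x) (γ : ℝ) : x ^ (γ - 1) * x = x ^ γ := by
  rw [sub_eq_add_neg, Real.rpow_add hx, Real.rpow_neg_one]
  field_simp

end MaxMorreyAux

set_option maxHeartbeats 2000000 in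
open MaxMorreyAux in
/-- For `1 < q < ∞`, the Hardy-Littlewood maximal operator is not bounded on `M^1_q`:
there is no constant `C > 0` with `‖Mf‖_{M^1_q} ≤ C ‖f‖_{M^1_q}` for all locally
integrable `f` with finite `M^1_q` norm. -/
theorem maximal_not_bounded_on_morreyOne (d : ℕ) (hd : 1 ≤ d) (q : ℝ) (hq : 1 < q) :
    ¬ ∃ C : ℝ, 0 < C ∧ ∀ f : EuclideanSpace ℝ (Fin d) → ℝ,
      LocallyIntegrable f volume →
      morreyNormOne d q (fun x => ENNReal.ofReal |f x|) < ⊤ →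
      morreyNormOne d q (maximalFn d f) ≤
        ENNReal.ofReal C * morreyNormOne d q (fun x => ENNReal.ofReal |f x|) := by
  classical
  rintro ⟨C, hC, hbound⟩
  haveI : Nonempty (Fin d) := ⟨⟨0, hd⟩⟩
  haveI : Nontrivial (EuclideanSpace ℝ (Fin d)) := by
    refine ⟨EuclideanSpace.single ⟨0, hd⟩ (1 : ℝ), 0, ?_⟩
    intro hcontra
    have := congrArg (fun v : EuclideanSpace ℝ (Fin d) => v ⟨0, hd⟩) hcontra
    simp [EuclideanSpace.single_apply] at this
  -- basic positivity facts about q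
  have hq0 : (0 : ℝ) < q := lt_trans one_pos hq
  have hq10 : (0 : ℝ) < q - 1 := by linarith
  have h1q : (0 : ℝ) < 1 / q := by positivity
  have h1q1 : 1 / q - 1 < 0 := by
    have : 1 / q < 1 := by rw [div_lt_one hq0]; exact hq
    linarith
  -- the unit ball volume
  set V : ℝ≥0∞ := volume (ball (0 : EuclideanSpace ℝ (Fin d)) 1) with hVdef
  have hV0 : V ≠ 0 := (measure_ball_pos volume _ one_pos).ne'
  have hVtop : V ≠ ⊤ := measure_ball_lt_top.ne
  have hvol : ∀ (a : EuclideanSpace ℝ (Fin d)) {r : ℝ}, 0 ≤ r →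
      volume (ball a r) = ENNReal.ofReal (r ^ d) * V := by
    intro a r hr
    rw [Measure.addHaar_ball volume a hr, finrank_euclideanSpace_fin]
  -- choice of K
  set Rd : ℝ := (d : ℝ) + 1 with hRddef
  have hRd0 : (0 : ℝ) < Rd := by positivity
  set c₀ : ℝ := (Rd ^ d) ^ (1 / q - 1) * (1 / 4 : ℝ) ^ d with hc₀def
  have hc₀0 : 0 < c₀ := by positivity
  set D : ℝ := C * 5 ^ d * ((Rd ^ d) ^ (1 - 1 / q) * 4 ^ d) with hDdef
  have hD0 : 0 < D := by positivity
  have hc₀D : c₀ * ((Rd ^ d) ^ (1 - 1 / q) * 4 ^ d) = 1 := by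
    rw [hc₀def]
    have h1 : (Rd ^ d) ^ (1 / q - 1) * (Rd ^ d) ^ (1 - 1 / q) = 1 := by
      rw [← Real.rpow_add (by positivity)]
      norm_num
    have h2 : (1 / 4 : ℝ) ^ d * 4 ^ d = 1 := by
      rw [div_pow, one_pow, div_mul_cancel₀]
      positivity
    calc (Rd ^ d) ^ (1 / q - 1) * (1 / 4 : ℝ) ^ d * ((Rd ^ d) ^ (1 - 1 / q) * 4 ^ d)
        = ((Rd ^ d) ^ (1 / q - 1) * (Rd ^ d) ^ (1 - 1 / q)) * ((1 / 4 : ℝ) ^ d * 4 ^ d) := by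
          ring
      _ = 1 := by rw [h1, h2, mul_one]
  set K : ℕ := ⌈D⌉₊ + 1 with hKdef
  have hKD : D < K := by
    have := Nat.le_ceil D
    have h2 : ((⌈D⌉₊ : ℝ)) < K := by
      rw [hKdef]; push_cast; linarith
    linarith
  have hK1 : 1 ≤ K := by omega
  -- choice of n
  set n : ℕ := ⌈((2 : ℝ) ^ (K + 2)) ^ (q - 1)⌉₊ + 1 with hndef
  have hn1 : 1 ≤ n := by omega
  have hn0 : (0 : ℝ) < n := by positivity
  have hnK : (2 : ℝ) ^ (K + 2) ≤ (n : ℝ) ^ (1 / (q - 1)) := by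
    have h1 : ((2 : ℝ) ^ (K + 2)) ^ (q - 1) ≤ (n : ℝ) := by
      have := Nat.le_ceil (((2 : ℝ) ^ (K + 2)) ^ (q - 1))
      rw [hndef]; push_cast; linarith
    have h2 : (((2 : ℝ) ^ (K + 2)) ^ (q - 1)) ^ (1 / (q - 1)) ≤ (n : ℝ) ^ (1 / (q - 1)) :=
      Real.rpow_le_rpow (by positivity) h1 (by positivity)
    calc (2 : ℝ) ^ (K + 2)
        = (((2 : ℝ) ^ (K + 2)) ^ (q - 1)) ^ (1 / (q - 1)) := by
          rw [← Real.rpow_natCast (2 : ℝ) (K + 2),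
            ← Real.rpow_mul (by norm_num : (0:ℝ) ≤ 2),
            ← Real.rpow_mul (by norm_num : (0:ℝ) ≤ 2)]
          congr 1
          field_simp
      _ ≤ (n : ℝ) ^ (1 / (q - 1)) := h2
  -- the scales t and ε
  set t : ℝ := (n : ℝ) ^ (-(1 / (q - 1))) with htdef
  have ht0 : 0 < t := Real.rpow_pos_of_pos hn0 _
  have htinv : t = ((n : ℝ) ^ (1 / (q - 1)))⁻¹ := by
    rw [htdef, Real.rpow_neg hn0.le]
  have h2K : (2 : ℝ) ^ (K + 2) * t ≤ 1 := by
    have hpos : (0 : ℝ) < (n : ℝ) ^ (1 / (q - 1)) := Real.rpow_pos_of_pos hn0 _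
    rw [htinv]
    calc (2 : ℝ) ^ (K + 2) * ((n : ℝ) ^ (1 / (q - 1)))⁻¹
        ≤ (n : ℝ) ^ (1 / (q - 1)) * ((n : ℝ) ^ (1 / (q - 1)))⁻¹ :=
          mul_le_mul_of_nonneg_right hnK (by positivity)
      _ = 1 := mul_inv_cancel₀ hpos.ne'
  have ht1 : t < 1 := by
    have h4 : (4 : ℝ) ≤ 2 ^ (K + 2) := by
      calc (4 : ℝ) = 2 ^ 2 := by norm_num
        _ ≤ 2 ^ (K + 2) := pow_le_pow_right₀ (by norm_num) (by omega)
    nlinarith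
  set ε : ℝ := t ^ q with hεdef
  have hε0 : 0 < ε := Real.rpow_pos_of_pos ht0 _
  have htq1 : t ^ (q - 1) = (n : ℝ)⁻¹ := by
    rw [htdef, ← Real.rpow_mul hn0.le]
    rw [show -(1 / (q - 1)) * (q - 1) = -1 by field_simp]
    exact Real.rpow_neg_one _
  have hεt : (n : ℝ) * ε = t := by
    have h1 : ε = t ^ (q - 1) * t := by
      rw [hεdef, ← rpow_sub_one_mul ht0 q]
    rw [h1, htq1]
    field_simp
  have hεq : ε ^ (1 / q : ℝ) = t := by
    rw [hεdef, ← Real.rpow_mul ht0.le]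
    rw [show q * (1 / q) = 1 by field_simp]
    exact Real.rpow_one t
  have hεdq : ((ε ^ d : ℝ)) ^ (1 / q : ℝ) = t ^ d := by
    rw [← Real.rpow_natCast ε d, ← Real.rpow_mul hε0.le, mul_comm,
      Real.rpow_mul hε0.le, hεq, Real.rpow_natCast]
  have hεt' : ε ≤ t := by
    have : (1 : ℝ) * ε ≤ (n : ℝ) * ε := by
      apply mul_le_mul_of_nonneg_right _ hε0.le
      exact_mod_cast hn1
    rw [one_mul] at this
    linarith [hεt]
  have hε1 : ε < 1 := lt_of_le_of_lt hεt' ht1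
  -- annulus radii bound
  have h2iK : ∀ i : Fin K, (2 : ℝ) ^ ((i : ℕ) + 1) * ε * (n : ℝ) ≤ 1 / 4 := by
    intro i
    have h1 : (2 : ℝ) ^ ((i : ℕ) + 1) ≤ 2 ^ K := by
      apply pow_le_pow_right₀ (by norm_num)
      have := i.is_lt
      omega
    have h2 : (2 : ℝ) ^ (K + 2) = 2 ^ K * 4 := by rw [pow_add]; norm_num
    have h3 : (2 : ℝ) ^ ((i : ℕ) + 1) * ε * (n : ℝ) = 2 ^ ((i : ℕ) + 1) * t := by
      rw [mul_assoc, mul_comm ε (n : ℝ), hεt]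
    rw [h3]
    nlinarith [pow_pos (show (0:ℝ) < 2 by norm_num) K]
  -- the grid
  set xg : (Fin d → Fin n) → EuclideanSpace ℝ (Fin d) :=
    fun j => (WithLp.toLp 2 (fun i => (j i : ℝ) / n) : EuclideanSpace ℝ (Fin d)) with hxgdef
  have hxgi : ∀ (j : Fin d → Fin n) (i : Fin d), xg j i = (j i : ℝ) / n := fun j i => rfl
  have hxgnorm : ∀ j, dist (xg j) 0 ≤ (d : ℝ) := by
    intro j
    rw [dist_zero_right, EuclideanSpace.norm_eq]
    have hsum : ∑ i, ‖xg j i‖ ^ 2 ≤ (d : ℝ) := by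
      calc ∑ i, ‖xg j i‖ ^ 2 ≤ ∑ _i : Fin d, (1 : ℝ) := by
            apply Finset.sum_le_sum
            intro i _
            rw [hxgi, Real.norm_eq_abs]
            have h1 : (0 : ℝ) ≤ (j i : ℝ) / n := by positivity
            have h2 : (j i : ℝ) / n ≤ 1 := by
              rw [div_le_one hn0]
              have := (j i).is_lt
              exact_mod_cast this.le
            rw [abs_of_nonneg h1]
            nlinarith
        _ = (d : ℝ) := by simp
    calc Real.sqrt (∑ i, ‖xg j i‖ ^ 2) ≤ Real.sqrt ((d : ℝ) ^ 2) := by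
          apply Real.sqrt_le_sqrt
          have hd1 : (1 : ℝ) ≤ (d : ℝ) := by exact_mod_cast hd
          nlinarith
      _ = (d : ℝ) := Real.sqrt_sq (by positivity)
  have hsep : ∀ j j' : Fin d → Fin n, j ≠ j' → (1 : ℝ) / n ≤ dist (xg j) (xg j') := by
    intro j j' hne
    obtain ⟨i, hi⟩ := Function.ne_iff.mp hne
    have hval : ((j i : ℕ) : ℤ) ≠ ((j' i : ℕ) : ℤ) := by
      intro hcontra
      exact hi (Fin.val_injective (by exact_mod_cast hcontra))
    have h1 : (1 : ℤ) ≤ |((j i : ℕ) : ℤ) - ((j' i : ℕ) : ℤ)| :=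
      Int.one_le_abs (sub_ne_zero.mpr hval)
    have h2 : (1 : ℝ) ≤ |(j i : ℝ) - (j' i : ℝ)| := by exact_mod_cast h1
    have h3 : (1 : ℝ) / n ≤ |xg j i - xg j' i| := by
      rw [hxgi, hxgi, div_sub_div_same, abs_div, abs_of_pos hn0, div_le_div_iff₀ hn0 hn0]
      nlinarith
    exact h3.trans (coord_le_dist (xg j) (xg j') i)
  -- the function f
  set U : Set (EuclideanSpace ℝ (Fin d)) := ⋃ j, ball (xg j) ε with hUdef
  have hUmeas : MeasurableSet U :=
    MeasurableSet.iUnion (fun j => measurableSet_ball)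
  set f : EuclideanSpace ℝ (Fin d) → ℝ := U.indicator (fun _ => 1) with hfdef
  have key_integral : ∀ s : Set (EuclideanSpace ℝ (Fin d)), MeasurableSet s →
      (∫⁻ y in s, ENNReal.ofReal |f y|) = volume (U ∩ s) := by
    intro s hs
    have heq : ∀ y, ENNReal.ofReal |f y| = U.indicator (fun _ => (1 : ℝ≥0∞)) y := by
      intro y
      rw [hfdef]
      by_cases hy : y ∈ U
      · simp [Set.indicator_of_mem hy]
      · simp [Set.indicator_of_notMem hy]
    calc (∫⁻ y in s, ENNReal.ofReal |f y|)
        = ∫⁻ y in s, U.indicator (fun _ => (1 : ℝ≥0∞)) y := by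
          exact lintegral_congr fun y => heq y
      _ = ∫⁻ y in U, (1 : ℝ≥0∞) ∂(volume.restrict s) := lintegral_indicator hUmeas _
      _ = (volume.restrict s) U := setLIntegral_one U
      _ = volume (U ∩ s) := by rw [Measure.restrict_apply hUmeas]
  have hUsub : U ⊆ ball (0 : EuclideanSpace ℝ (Fin d)) Rd := by
    intro y hy
    obtain ⟨j, hj⟩ := Set.mem_iUnion.mp hy
    rw [mem_ball] at hj ⊢
    calc dist y 0 ≤ dist y (xg j) + dist (xg j) 0 := dist_triangle _ _ _
      _ < ε + d := add_lt_add_of_lt_of_le hj (hxgnorm j)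
      _ ≤ Rd := by rw [hRddef]; linarith
  have hloc : LocallyIntegrable f volume := by
    apply MeasureTheory.Integrable.locallyIntegrable
    rw [hfdef]
    rw [integrable_indicator_iff hUmeas]
    apply (integrableOn_const_iff (C := (1 : ℝ))).mpr
    right
    exact lt_of_le_of_lt (measure_mono hUsub) measure_ball_lt_top
  -- the target quantity Λ
  set Λ : ℝ≥0∞ := V ^ (1 / q - 1) * V * ENNReal.ofReal (t ^ d) with hΛdef
  have hΛ0 : Λ ≠ 0 := by
    rw [hΛdef]
    apply mul_ne_zero (mul_ne_zero _ _)
    · exact (ENNReal.ofReal_pos.mpr (by positivity)).ne'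
    · exact (ENNReal.rpow_pos (hV0.bot_lt) hVtop).ne'
    · exact hV0
  have hVr_top : V ^ (1 / q - 1) ≠ ⊤ := by
    rw [show (1 / q - 1 : ℝ) = -(1 - 1 / q) by ring, ENNReal.rpow_neg]
    exact ENNReal.inv_ne_top.mpr (ENNReal.rpow_pos hV0.bot_lt hVtop).ne'
  have hΛtop : Λ ≠ ⊤ := by
    rw [hΛdef]
    exact ENNReal.mul_ne_top (ENNReal.mul_ne_top hVr_top hVtop) ENNReal.ofReal_ne_top
  -- UPPER BOUND on the Morrey norm of f
  have hMcast : ∀ M : ℕ, ((M ^ d : ℕ) : ℝ≥0∞) = ENNReal.ofReal ((M : ℝ) ^ d) := by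
    intro M
    rw [← ENNReal.ofReal_natCast (M ^ d)]
    congr 1
    push_cast
    ring
  have hupper : morreyNormOne d q (fun x => ENNReal.ofReal |f x|) ≤ (5 : ℝ≥0∞) ^ d * Λ := by
    have h5d1 : (1 : ℝ≥0∞) ≤ (5 : ℝ≥0∞) ^ d :=
      one_le_pow_of_one_le' (by norm_num : (1 : ℝ≥0∞) ≤ 5) d
    rw [morreyNormOne]
    refine iSup_le fun a => iSup_le fun r => iSup_le fun hr => ?_
    rw [key_integral _ measurableSet_ball]
    have hvol0 : volume (ball a r) ≠ 0 := (measure_ball_pos volume a hr).ne'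
    have hvoltop : volume (ball a r) ≠ ⊤ := measure_ball_lt_top.ne
    rcases le_or_gt r ε with hrε | hεr
    · -- small radius: the trivial bound by the full ball volume suffices
      have hb2 : volume (ball a r) ^ (1 / q - 1) * volume (ball a r)
          = volume (ball a r) ^ (1 / q : ℝ) := by
        nth_rewrite 2 [← ENNReal.rpow_one (volume (ball a r))]
        rw [← ENNReal.rpow_add _ _ hvol0 hvoltop]
        norm_num
      have hb3 : volume (ball a r) ^ (1 / q : ℝ) ≤ (ENNReal.ofReal (ε ^ d) * V) ^ (1 / q : ℝ) := by
        apply ENNReal.rpow_le_rpow _ (le_of_lt h1q)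
        rw [hvol a hr.le]
        exact mul_le_mul_left (ENNReal.ofReal_le_ofReal
          (pow_le_pow_left₀ hr.le hrε d)) V
      have hb4 : (ENNReal.ofReal (ε ^ d) * V) ^ (1 / q : ℝ)
          = ENNReal.ofReal (t ^ d) * V ^ (1 / q : ℝ) := by
        rw [ENNReal.mul_rpow_of_nonneg _ _ (le_of_lt h1q),
          ENNReal.ofReal_rpow_of_pos (by positivity), hεdq]
      have hb5 : V ^ (1 / q : ℝ) = V ^ (1 / q - 1) * V := by
        nth_rewrite 3 [← ENNReal.rpow_one V]
        rw [← ENNReal.rpow_add _ _ hV0 hVtop]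
        norm_num
      calc volume (ball a r) ^ (1 / q - 1) * volume (U ∩ ball a r)
          ≤ volume (ball a r) ^ (1 / q - 1) * volume (ball a r) :=
            mul_le_mul_right (measure_mono Set.inter_subset_right) _
        _ = volume (ball a r) ^ (1 / q : ℝ) := hb2
        _ ≤ (ENNReal.ofReal (ε ^ d) * V) ^ (1 / q : ℝ) := hb3
        _ = ENNReal.ofReal (t ^ d) * V ^ (1 / q : ℝ) := hb4
        _ = Λ := by rw [hb5, hΛdef]; ring
        _ ≤ (5 : ℝ≥0∞) ^ d * Λ := le_mul_of_one_le_left zero_le h5d1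
    · -- large radius: count the bumps meeting the ball
      set G : Finset (Fin d → Fin n) :=
        Finset.univ.filter (fun j => xg j ∈ ball a (r + ε)) with hGdef
      have hI2 : volume (U ∩ ball a r) ≤ (G.card : ℝ≥0∞) * (ENNReal.ofReal (ε ^ d) * V) := by
        have hsub : U ∩ ball a r ⊆ ⋃ j ∈ G, ball (xg j) ε := by
          rintro y ⟨hyU, hyB⟩
          obtain ⟨j, hj⟩ := Set.mem_iUnion.mp hyU
          have hjG : j ∈ G := by
            rw [hGdef, Finset.mem_filter]
            refine ⟨Finset.mem_univ _, ?_⟩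
            rw [mem_ball]
            calc dist (xg j) a ≤ dist (xg j) y + dist y a := dist_triangle _ _ _
              _ < ε + r := add_lt_add_of_lt_of_le
                  (by rw [dist_comm]; exact mem_ball.mp hj) (le_of_lt (mem_ball.mp hyB))
              _ = r + ε := by ring
          exact Set.mem_biUnion hjG hj
        calc volume (U ∩ ball a r) ≤ volume (⋃ j ∈ G, ball (xg j) ε) := measure_mono hsub
          _ ≤ ∑ j ∈ G, volume (ball (xg j) ε) := measure_biUnion_finset_le _ _
          _ = (G.card : ℝ≥0∞) * (ENNReal.ofReal (ε ^ d) * V) := by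
              rw [Finset.sum_congr rfl (fun j _ => hvol (xg j) hε0.le),
                Finset.sum_const, nsmul_eq_mul]
      set M : ℕ := min ⌈2 * (n : ℝ) * (r + ε)⌉₊ n with hMdef
      have hrε0 : (0 : ℝ) < r + ε := by linarith
      have hGcard : G.card ≤ M ^ d := by
        have hsubpi : G ⊆ Fintype.piFinset (fun i => Finset.univ.filter
            (fun k : Fin n => (n : ℝ) * (a i) - (n : ℝ) * (r + ε) < (k : ℝ) ∧
              (k : ℝ) < ((n : ℝ) * (a i) - (n : ℝ) * (r + ε)) + 2 * (n : ℝ) * (r + ε))) := by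
          intro j hj
          rw [Fintype.mem_piFinset]
          intro i
          rw [Finset.mem_filter]
          refine ⟨Finset.mem_univ _, ?_⟩
          have hb : dist (xg j) a < r + ε := mem_ball.mp ((Finset.mem_filter.mp hj).2)
          have hco : |xg j i - a i| ≤ dist (xg j) a := coord_le_dist _ _ i
          rw [hxgi] at hco
          have habs : |(j i : ℝ) / n - a i| < r + ε := lt_of_le_of_lt hco hb
          rw [abs_sub_lt_iff] at habs
          obtain ⟨ha1, ha2⟩ := habs
          have hd1 : (j i : ℝ) / n * n = (j i : ℝ) := by field_simp
          constructor
          · nlinarith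
          · nlinarith
        have h1 := Finset.card_le_card hsubpi
        rw [Fintype.card_piFinset] at h1
        refine h1.trans ?_
        have h2 : ∀ i : Fin d, (Finset.univ.filter
            (fun k : Fin n => (n : ℝ) * (a i) - (n : ℝ) * (r + ε) < (k : ℝ) ∧
              (k : ℝ) < ((n : ℝ) * (a i) - (n : ℝ) * (r + ε)) + 2 * (n : ℝ) * (r + ε))).card
            ≤ M := by
          intro i
          apply le_min
          · exact card_window (P := fun k : Fin n =>
              (n : ℝ) * (a i) - (n : ℝ) * (r + ε) < (k : ℝ) ∧
              (k : ℝ) < ((n : ℝ) * (a i) - (n : ℝ) * (r + ε)) + 2 * (n : ℝ) * (r + ε))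
              (fun k hk => hk)
          · exact le_trans (Finset.card_filter_le _ _) (by simp)
        refine (Finset.prod_le_prod' fun i _ => h2 i).trans ?_
        rw [Finset.prod_const]
        simp
      have hM0 : (0 : ℝ) ≤ (M : ℝ) := by positivity
      have hM1 : (M : ℝ) ≤ 2 * (n : ℝ) * (r + ε) + 1 := by
        have ha : (M : ℝ) ≤ (⌈2 * (n : ℝ) * (r + ε)⌉₊ : ℝ) :=
          Nat.cast_le.mpr (min_le_left _ _)
        have hb := Nat.ceil_lt_add_one (by positivity : (0 : ℝ) ≤ 2 * (n : ℝ) * (r + ε))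
        linarith
      have hM2 : (M : ℝ) ≤ (n : ℝ) := Nat.cast_le.mpr (min_le_right _ _)
      -- the key real-number estimate
      have hreal : (r ^ d) ^ (1 / q - 1 : ℝ) * ((M : ℝ) ^ d * ε ^ d) ≤ 5 ^ d * t ^ d := by
        have hrd0 : (0 : ℝ) < r ^ d := by positivity
        rcases le_or_gt r (1 / (n : ℝ)) with hr1n | hr1n
        · have hM5 : (M : ℝ) ≤ 5 := by
            have hnr : (n : ℝ) * r ≤ 1 := by
              rw [le_div_iff₀ hn0] at hr1n
              linarith
            nlinarith
          have h1 : (r ^ d) ^ (1 / q - 1 : ℝ) ≤ (ε ^ d) ^ (1 / q - 1 : ℝ) :=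
            Real.rpow_le_rpow_of_nonpos (by positivity)
              (pow_le_pow_left₀ hε0.le hεr.le d) h1q1.le
          have h2 : (ε ^ d) ^ (1 / q - 1 : ℝ) * ε ^ d = t ^ d := by
            rw [rpow_sub_one_mul (by positivity : (0 : ℝ) < ε ^ d) (1 / q), hεdq]
          calc (r ^ d) ^ (1 / q - 1 : ℝ) * ((M : ℝ) ^ d * ε ^ d)
              ≤ (ε ^ d) ^ (1 / q - 1 : ℝ) * (5 ^ d * ε ^ d) := by
                apply mul_le_mul h1 ?_ (by positivity) (by positivity)
                exact mul_le_mul_of_nonneg_right (pow_le_pow_left₀ hM0 hM5 d) (by positivity)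
            _ = 5 ^ d * ((ε ^ d) ^ (1 / q - 1 : ℝ) * ε ^ d) := by ring
            _ = 5 ^ d * t ^ d := by rw [h2]
        · rcases le_or_gt r 1 with hr1 | hr1
          · have hnr : 1 ≤ (n : ℝ) * r := by
              rw [div_lt_iff₀ hn0] at hr1n
              linarith
            have hM5 : (M : ℝ) ≤ 5 * ((n : ℝ) * r) := by nlinarith
            have h1 : (r ^ d) ^ (1 / q - 1 : ℝ) * r ^ d = (r ^ d) ^ (1 / q : ℝ) :=
              rpow_sub_one_mul hrd0 (1 / q)
            have h2 : (r ^ d) ^ (1 / q : ℝ) ≤ 1 :=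
              Real.rpow_le_one (by positivity) (pow_le_one₀ hr.le hr1) (le_of_lt h1q)
            calc (r ^ d) ^ (1 / q - 1 : ℝ) * ((M : ℝ) ^ d * ε ^ d)
                ≤ (r ^ d) ^ (1 / q - 1 : ℝ) * ((5 * ((n : ℝ) * r)) ^ d * ε ^ d) := by
                  apply mul_le_mul_of_nonneg_left ?_ (by positivity)
                  exact mul_le_mul_of_nonneg_right (pow_le_pow_left₀ hM0 hM5 d) (by positivity)
              _ = ((r ^ d) ^ (1 / q - 1 : ℝ) * r ^ d) * (5 ^ d * ((n : ℝ) * ε) ^ d) := by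
                  ring
              _ = (r ^ d) ^ (1 / q : ℝ) * (5 ^ d * t ^ d) := by rw [h1, hεt]
              _ ≤ 1 * (5 ^ d * t ^ d) := mul_le_mul_of_nonneg_right h2 (by positivity)
              _ = 5 ^ d * t ^ d := one_mul _
          · have h1 : (r ^ d) ^ (1 / q - 1 : ℝ) ≤ 1 :=
              Real.rpow_le_one_of_one_le_of_nonpos (one_le_pow₀ hr1.le) h1q1.le
            have h5 : (1 : ℝ) ≤ 5 ^ d := one_le_pow₀ (by norm_num)
            calc (r ^ d) ^ (1 / q - 1 : ℝ) * ((M : ℝ) ^ d * ε ^ d)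
                ≤ 1 * ((n : ℝ) ^ d * ε ^ d) := by
                  apply mul_le_mul h1 ?_ (by positivity) (by norm_num)
                  exact mul_le_mul_of_nonneg_right (pow_le_pow_left₀ hM0 hM2 d) (by positivity)
              _ = ((n : ℝ) * ε) ^ d := by rw [one_mul, mul_pow]
              _ = t ^ d := by rw [hεt]
              _ ≤ 5 ^ d * t ^ d := le_mul_of_one_le_left (by positivity) h5
      calc volume (ball a r) ^ (1 / q - 1) * volume (U ∩ ball a r)
          ≤ volume (ball a r) ^ (1 / q - 1)
            * ((G.card : ℝ≥0∞) * (ENNReal.ofReal (ε ^ d) * V)) := mul_le_mul_right hI2 _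
        _ ≤ volume (ball a r) ^ (1 / q - 1)
            * (((M ^ d : ℕ) : ℝ≥0∞) * (ENNReal.ofReal (ε ^ d) * V)) := by
            apply mul_le_mul_right
            apply mul_le_mul_left
            exact_mod_cast Nat.cast_le.mpr hGcard
        _ = (ENNReal.ofReal ((r ^ d) ^ (1 / q - 1 : ℝ))
            * ENNReal.ofReal ((M : ℝ) ^ d * ε ^ d)) * (V ^ (1 / q - 1) * V) := by
            rw [hvol a hr.le, ENNReal.mul_rpow_of_ne_top ENNReal.ofReal_ne_top hVtop,
              ENNReal.ofReal_rpow_of_pos (by positivity), hMcast M,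
              ENNReal.ofReal_mul (by positivity : (0 : ℝ) ≤ (M : ℝ) ^ d)]
            ring
        _ = ENNReal.ofReal ((r ^ d) ^ (1 / q - 1 : ℝ) * ((M : ℝ) ^ d * ε ^ d))
            * (V ^ (1 / q - 1) * V) := by
            rw [ENNReal.ofReal_mul (by positivity : (0 : ℝ) ≤ (r ^ d) ^ (1 / q - 1 : ℝ))]
        _ ≤ ENNReal.ofReal (5 ^ d * t ^ d) * (V ^ (1 / q - 1) * V) :=
            mul_le_mul_left (ENNReal.ofReal_le_ofReal hreal) _
        _ = (5 : ℝ≥0∞) ^ d * Λ := by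
            rw [ENNReal.ofReal_mul (by positivity), ENNReal.ofReal_pow (by norm_num),
              ENNReal.ofReal_ofNat, hΛdef]
            ring
  -- LOWER BOUND on the Morrey norm of Mf
  have hlower : ENNReal.ofReal (c₀ * K) * Λ ≤ morreyNormOne d q (maximalFn d f) := by
    set A : (Fin d → Fin n) × Fin K → Set (EuclideanSpace ℝ (Fin d)) :=
      fun σ => ball (xg σ.1) (2 ^ ((σ.2 : ℕ) + 1) * ε) \ ball (xg σ.1) (2 ^ (σ.2 : ℕ) * ε)
      with hAdef
    have hAmeas : ∀ σ, MeasurableSet (A σ) := by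
      intro σ
      rw [hAdef]
      exact measurableSet_ball.diff measurableSet_ball
    have hradle : ∀ i : Fin K, (2 : ℝ) ^ ((i : ℕ) + 1) * ε ≤ 1 / (4 * n) := by
      intro i
      rw [le_div_iff₀ (by positivity)]
      nlinarith [h2iK i]
    -- pointwise lower bound for the maximal function on each annulus
    have hptwise : ∀ σ : (Fin d → Fin n) × Fin K, ∀ x ∈ A σ,
        ENNReal.ofReal ((1 / 2 ^ ((σ.2 : ℕ) + 2) : ℝ) ^ d) ≤ maximalFn d f x := by
      rintro ⟨j, i⟩ x hx
      simp only [hAdef] at hx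
      have hxj : dist x (xg j) < 2 ^ ((i : ℕ) + 1) * ε := mem_ball.mp hx.1
      set ρ : ℝ := 2 ^ ((i : ℕ) + 2) * ε with hρdef
      have hρ0 : 0 < ρ := by positivity
      have hρd0 : (0 : ℝ) < ρ ^ d := by positivity
      have hsubB : ball (xg j) ε ⊆ U ∩ ball x ρ := by
        intro y hy
        refine ⟨by rw [hUdef]; exact Set.mem_iUnion.mpr ⟨j, hy⟩, ?_⟩
        rw [mem_ball]
        have h1 : dist y (xg j) < ε := mem_ball.mp hy
        have h2 : (2 : ℝ) ^ ((i : ℕ) + 1) * ε + ε ≤ ρ := by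
          rw [hρdef]
          have h3 : (1 : ℝ) ≤ 2 ^ ((i : ℕ) + 1) := one_le_pow₀ (by norm_num)
          have h4 : (2 : ℝ) ^ ((i : ℕ) + 2) = 2 * 2 ^ ((i : ℕ) + 1) := by ring
          nlinarith
        calc dist y x ≤ dist y (xg j) + dist (xg j) x := dist_triangle _ _ _
          _ < ε + 2 ^ ((i : ℕ) + 1) * ε := add_lt_add h1 (by rw [dist_comm]; exact hxj)
          _ ≤ ρ := by linarith
      have hint : ENNReal.ofReal (ε ^ d) * V ≤ ∫⁻ y in ball x ρ, ENNReal.ofReal |f y| := by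
        rw [key_integral _ measurableSet_ball, ← hvol (xg j) hε0.le]
        exact measure_mono hsubB
      have hreal : ((1 : ℝ) / 2 ^ ((i : ℕ) + 2)) ^ d = ε ^ d / ρ ^ d := by
        rw [hρdef, mul_pow, div_pow, one_pow, div_eq_div_iff (by positivity) (by positivity)]
        ring
      have hval : (volume (ball x ρ))⁻¹ * (ENNReal.ofReal (ε ^ d) * V)
          = ENNReal.ofReal ((1 / 2 ^ ((i : ℕ) + 2) : ℝ) ^ d) := by
        rw [hvol x hρ0.le, ENNReal.mul_inv (Or.inl (ENNReal.ofReal_pos.mpr hρd0).ne')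
          (Or.inl ENNReal.ofReal_ne_top)]
        calc (ENNReal.ofReal (ρ ^ d))⁻¹ * V⁻¹ * (ENNReal.ofReal (ε ^ d) * V)
            = ENNReal.ofReal (ε ^ d) * (ENNReal.ofReal (ρ ^ d))⁻¹ * (V⁻¹ * V) := by ring
          _ = ENNReal.ofReal (ε ^ d) / ENNReal.ofReal (ρ ^ d) := by
              rw [ENNReal.inv_mul_cancel hV0 hVtop, mul_one, div_eq_mul_inv]
          _ = ENNReal.ofReal (ε ^ d / ρ ^ d) := (ENNReal.ofReal_div_of_pos hρd0).symm
          _ = ENNReal.ofReal ((1 / 2 ^ ((i : ℕ) + 2) : ℝ) ^ d) := by rw [hreal]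
      have hstep : ENNReal.ofReal ((1 / 2 ^ ((i : ℕ) + 2) : ℝ) ^ d)
          ≤ (volume (ball x ρ))⁻¹ * ∫⁻ y in ball x ρ, ENNReal.ofReal |f y| := by
        rw [← hval]
        exact mul_le_mul_right hint _
      refine hstep.trans ?_
      rw [maximalFn]
      exact le_iSup_of_le ρ (le_iSup_of_le hρ0 le_rfl)
    -- disjointness of the annuli
    have hAdisj : Pairwise (Function.onFun Disjoint A) := by
      rintro ⟨j, i⟩ ⟨j', i'⟩ hne
      rw [Function.onFun, Set.disjoint_left]
      intro x hx hx'
      simp only [hAdef] at hx hx'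
      by_cases hjj : j = j'
      · subst hjj
        have hii : i ≠ i' := by
          intro hc
          exact hne (by rw [hc])
      -- compare the scales
        rcases lt_trichotomy (i : ℕ) (i' : ℕ) with hlt | heq | hgt
        · have h1 : dist x (xg j) < 2 ^ ((i : ℕ) + 1) * ε := mem_ball.mp hx.1
          have h2 : ¬ dist x (xg j) < 2 ^ (i' : ℕ) * ε := fun hc => hx'.2 (mem_ball.mpr hc)
          apply h2
          have h3 : (2 : ℝ) ^ ((i : ℕ) + 1) ≤ 2 ^ (i' : ℕ) :=
            pow_le_pow_right₀ (by norm_num) (by omega)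
          nlinarith
        · exact hii (Fin.val_injective heq)
        · have h1 : dist x (xg j) < 2 ^ ((i' : ℕ) + 1) * ε := mem_ball.mp hx'.1
          have h2 : ¬ dist x (xg j) < 2 ^ (i : ℕ) * ε := fun hc => hx.2 (mem_ball.mpr hc)
          apply h2
          have h3 : (2 : ℝ) ^ ((i' : ℕ) + 1) ≤ 2 ^ (i : ℕ) :=
            pow_le_pow_right₀ (by norm_num) (by omega)
          nlinarith
      · have h1 : dist x (xg j) < 1 / (4 * n) :=
          lt_of_lt_of_le (mem_ball.mp hx.1) (hradle i)
        have h1' : dist x (xg j') < 1 / (4 * n) :=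
          lt_of_lt_of_le (mem_ball.mp hx'.1) (hradle i')
        have h2 := hsep j j' hjj
        have h3 : dist (xg j) (xg j') ≤ dist (xg j) x + dist x (xg j') := dist_triangle _ _ _
        rw [dist_comm (xg j) x] at h3
        have h4 : (1 : ℝ) / n = 4 * (1 / (4 * n)) := by field_simp
        have h5 : (0 : ℝ) < 1 / (4 * n) := by positivity
        linarith
    -- the annuli sit inside the ball of radius Rd
    have hAsub : ∀ σ, A σ ⊆ ball (0 : EuclideanSpace ℝ (Fin d)) Rd := by
      rintro ⟨j, i⟩ x hx
      simp only [hAdef] at hx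
      rw [mem_ball]
      have h1 : dist x (xg j) < 1 / (4 * n) :=
        lt_of_lt_of_le (mem_ball.mp hx.1) (hradle i)
      have h2 : (1 : ℝ) / (4 * n) ≤ 1 := by
        rw [div_le_one (by positivity)]
        have : (1 : ℝ) ≤ n := by exact_mod_cast hn1
        nlinarith
      calc dist x 0 ≤ dist x (xg j) + dist (xg j) 0 := dist_triangle _ _ _
        _ < 1 / (4 * n) + d := add_lt_add_of_lt_of_le h1 (hxgnorm j)
        _ ≤ Rd := by rw [hRddef]; linarith
    -- volume of each annulus
    have hvolA : ∀ σ : (Fin d → Fin n) × Fin K,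
        ENNReal.ofReal ((2 ^ (σ.2 : ℕ) * ε) ^ d) * V ≤ volume (A σ) := by
      rintro ⟨j, i⟩
      have hsub : ball (xg j) (2 ^ (i : ℕ) * ε) ⊆ ball (xg j) (2 ^ ((i : ℕ) + 1) * ε) := by
        apply ball_subset_ball
        have h1 : (2 : ℝ) ^ (i : ℕ) ≤ 2 ^ ((i : ℕ) + 1) :=
          pow_le_pow_right₀ (by norm_num) (by omega)
        nlinarith
      rw [hAdef]
      simp only
      rw [measure_diff hsub measurableSet_ball.nullMeasurableSet measure_ball_lt_top.ne,
        hvol _ (by positivity), hvol _ (by positivity)]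
      apply ENNReal.le_sub_of_add_le_right
        (ENNReal.mul_ne_top ENNReal.ofReal_ne_top hVtop)
      rw [← add_mul, ← ENNReal.ofReal_add (by positivity) (by positivity)]
      apply mul_le_mul_left
      apply ENNReal.ofReal_le_ofReal
      have h2 : ((2 : ℝ) ^ ((i : ℕ) + 1) * ε) ^ d = 2 ^ d * (2 ^ (i : ℕ) * ε) ^ d := by
        calc ((2 : ℝ) ^ ((i : ℕ) + 1) * ε) ^ d = (2 * (2 ^ (i : ℕ) * ε)) ^ d := by
              congr 1
              ring
          _ = 2 ^ d * (2 ^ (i : ℕ) * ε) ^ d := mul_pow _ _ d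
      have h3 : (2 : ℝ) ≤ 2 ^ d := by
        calc (2 : ℝ) = 2 ^ 1 := (pow_one 2).symm
          _ ≤ 2 ^ d := pow_le_pow_right₀ (by norm_num) hd
      nlinarith [pow_nonneg (by positivity : (0 : ℝ) ≤ 2 ^ (i : ℕ) * ε) d]
    -- the integral over each annulus
    have hpiece : ∀ σ : (Fin d → Fin n) × Fin K,
        ENNReal.ofReal ((1 / 4 : ℝ) ^ d * ε ^ d) * V ≤ ∫⁻ x in A σ, maximalFn d f x := by
      rintro ⟨j, i⟩
      have hrealid : ((1 / 4 : ℝ) ^ d * ε ^ d)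
          = (1 / 2 ^ ((i : ℕ) + 2) : ℝ) ^ d * (2 ^ (i : ℕ) * ε) ^ d := by
        rw [← mul_pow, ← mul_pow]
        congr 1
        have h4 : (2 : ℝ) ^ ((i : ℕ) + 2) = 2 ^ (i : ℕ) * 4 := by rw [pow_add]; norm_num
        rw [h4]
        have h5 : (0 : ℝ) < 2 ^ (i : ℕ) := by positivity
        field_simp
      have hstep1 : ENNReal.ofReal ((1 / 4 : ℝ) ^ d * ε ^ d) * V
          ≤ ENNReal.ofReal ((1 / 2 ^ ((i : ℕ) + 2) : ℝ) ^ d) * volume (A (j, i)) := by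
        calc ENNReal.ofReal ((1 / 4 : ℝ) ^ d * ε ^ d) * V
            = ENNReal.ofReal ((1 / 2 ^ ((i : ℕ) + 2) : ℝ) ^ d)
              * (ENNReal.ofReal ((2 ^ (i : ℕ) * ε) ^ d) * V) := by
              rw [hrealid, ENNReal.ofReal_mul (by positivity), mul_assoc]
          _ ≤ ENNReal.ofReal ((1 / 2 ^ ((i : ℕ) + 2) : ℝ) ^ d) * volume (A (j, i)) :=
              mul_le_mul_right (hvolA (j, i)) _
      refine hstep1.trans ?_
      rw [← setLIntegral_const (A (j, i)) (ENNReal.ofReal ((1 / 2 ^ ((i : ℕ) + 2) : ℝ) ^ d))]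
      exact lintegral_mono_ae ((ae_restrict_iff' (hAmeas (j, i))).mpr
        (ae_of_all _ (hptwise (j, i))))
    -- summing over all annuli
    have hsum : (((n ^ d * K : ℕ)) : ℝ≥0∞) * (ENNReal.ofReal ((1 / 4 : ℝ) ^ d * ε ^ d) * V)
        ≤ ∫⁻ x in ball (0 : EuclideanSpace ℝ (Fin d)) Rd, maximalFn d f x := by
      calc (((n ^ d * K : ℕ)) : ℝ≥0∞) * (ENNReal.ofReal ((1 / 4 : ℝ) ^ d * ε ^ d) * V)
          = ∑ _σ : (Fin d → Fin n) × Fin K, (ENNReal.ofReal ((1 / 4 : ℝ) ^ d * ε ^ d) * V) := by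
            rw [Finset.sum_const, nsmul_eq_mul]
            congr 1
            rw [Finset.card_univ]
            simp [Fintype.card_prod, Fintype.card_fun]
        _ ≤ ∑ σ : (Fin d → Fin n) × Fin K, ∫⁻ x in A σ, maximalFn d f x :=
            Finset.sum_le_sum (fun σ _ => hpiece σ)
        _ = ∫⁻ x in ⋃ σ, A σ, maximalFn d f x := by
            rw [lintegral_iUnion hAmeas hAdisj, tsum_fintype]
        _ ≤ ∫⁻ x in ball (0 : EuclideanSpace ℝ (Fin d)) Rd, maximalFn d f x :=
            lintegral_mono_set (Set.iUnion_subset hAsub)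
    -- assembling the lower bound
    have hleft : volume (ball (0 : EuclideanSpace ℝ (Fin d)) Rd) ^ (1 / q - 1)
        * ((((n ^ d * K : ℕ)) : ℝ≥0∞) * (ENNReal.ofReal ((1 / 4 : ℝ) ^ d * ε ^ d) * V))
        = ENNReal.ofReal (c₀ * K) * Λ := by
      rw [hvol _ hRd0.le, ENNReal.mul_rpow_of_ne_top ENNReal.ofReal_ne_top hVtop,
        ENNReal.ofReal_rpow_of_pos (by positivity), ← ENNReal.ofReal_natCast (n ^ d * K)]
      calc ENNReal.ofReal ((Rd ^ d) ^ (1 / q - 1 : ℝ)) * V ^ (1 / q - 1)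
            * (ENNReal.ofReal (((n ^ d * K : ℕ) : ℝ))
              * (ENNReal.ofReal ((1 / 4 : ℝ) ^ d * ε ^ d) * V))
          = ENNReal.ofReal ((Rd ^ d) ^ (1 / q - 1 : ℝ)
              * (((n ^ d * K : ℕ) : ℝ) * ((1 / 4 : ℝ) ^ d * ε ^ d))) * (V ^ (1 / q - 1) * V) := by
            rw [ENNReal.ofReal_mul (by positivity : (0 : ℝ) ≤ (Rd ^ d) ^ (1 / q - 1 : ℝ)),
              ENNReal.ofReal_mul (by positivity : (0 : ℝ) ≤ ((n ^ d * K : ℕ) : ℝ))]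
            ring
        _ = ENNReal.ofReal (c₀ * (K : ℝ) * t ^ d) * (V ^ (1 / q - 1) * V) := by
            congr 2
            have htd : t ^ d = (n : ℝ) ^ d * ε ^ d := by rw [← hεt, mul_pow]
            have hcast : ((n ^ d * K : ℕ) : ℝ) = (n : ℝ) ^ d * (K : ℝ) := by push_cast; ring
            rw [hcast, htd, hc₀def]
            ring
        _ = ENNReal.ofReal (c₀ * K) * Λ := by
            rw [show c₀ * (K : ℝ) * t ^ d = (c₀ * (K : ℝ)) * t ^ d by ring,
              ENNReal.ofReal_mul (by positivity : (0 : ℝ) ≤ c₀ * (K : ℝ)), hΛdef]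
            ring
    calc ENNReal.ofReal (c₀ * K) * Λ
        = volume (ball (0 : EuclideanSpace ℝ (Fin d)) Rd) ^ (1 / q - 1)
          * ((((n ^ d * K : ℕ)) : ℝ≥0∞) * (ENNReal.ofReal ((1 / 4 : ℝ) ^ d * ε ^ d) * V)) :=
          hleft.symm
      _ ≤ volume (ball (0 : EuclideanSpace ℝ (Fin d)) Rd) ^ (1 / q - 1)
          * ∫⁻ x in ball (0 : EuclideanSpace ℝ (Fin d)) Rd, maximalFn d f x :=
          mul_le_mul_right hsum _
      _ ≤ morreyNormOne d q (maximalFn d f) := by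
          rw [morreyNormOne]
          exact le_iSup_of_le 0 (le_iSup_of_le Rd (le_iSup_of_le hRd0 le_rfl))
  -- combine
  have hfin : morreyNormOne d q (fun x => ENNReal.ofReal |f x|) < ⊤ :=
    lt_of_le_of_lt hupper
      (ENNReal.mul_lt_top (by simp [lt_top_iff_ne_top]) hΛtop.lt_top)
  have hchain := (hlower.trans ((hbound f hloc hfin).trans
    (mul_le_mul_right hupper _)))
  have hchain2 : ENNReal.ofReal (c₀ * K) * Λ ≤ ENNReal.ofReal (C * 5 ^ d) * Λ := by
    refine hchain.trans (le_of_eq ?_)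
    rw [ENNReal.ofReal_mul hC.le, ENNReal.ofReal_pow (by norm_num)]
    norm_num
    ring
  rw [ENNReal.mul_le_mul_iff_left hΛ0 hΛtop] at hchain2
  rw [ENNReal.ofReal_le_ofReal_iff (by positivity)] at hchain2
  -- conclude the contradiction
  have hfinal : (K : ℝ) ≤ D := by
    have h1 : c₀ * K * ((Rd ^ d) ^ (1 - 1 / q) * 4 ^ d)
        ≤ C * 5 ^ d * ((Rd ^ d) ^ (1 - 1 / q) * 4 ^ d) := by
      apply mul_le_mul_of_nonneg_right hchain2 (by positivity)
    have h2 : c₀ * K * ((Rd ^ d) ^ (1 - 1 / q) * 4 ^ d) = (K : ℝ) := by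
      calc c₀ * K * ((Rd ^ d) ^ (1 - 1 / q) * 4 ^ d)
          = c₀ * ((Rd ^ d) ^ (1 - 1 / q) * 4 ^ d) * K := by ring
        _ = (K : ℝ) := by rw [hc₀D, one_mul]
    rw [h2] at h1
    rw [hDdef]
    linarith
  linarith
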